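/- Let Z ≥ 2 be an integer and C ∈ ℝ, let (Ω, μ) be a probability space with a measurable label map Y : Ω → {1,…,Z}, and let a, b : Ω → ℝ^Z be measurable and bounded with Σ_{j=1}^Z a(ω)_j = C and Σ_{j=1}^Z b(ω)_j = C for every ω. Define R(a) = ∫ a(ω)_{Y(ω)} dμ(ω) and R^η(a) = ∫ [(1−η) a(ω)_{Y(ω)} + (η/(Z−1)) Σ_{j ≠ Y(ω)} a(ω)_j] dμ(ω), and similarly for b. If 0 ≤ η < (Z−1)/Z and R(a) ≤ R(b), then R^η(a) ≤ R^η(b); i.e., any loss whose sum over all Z labels is a constant independent of the prediction is noise-tolerant to symmetric label noise of rate η < (Z−1)/Z. -/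

import Mathlib

open MeasureTheory Real Finset

lemma eval_measurable {Z : ℕ} {Ω : Type*} [MeasurableSpace Ω]
    (Y : Ω → Fin Z) (hY : Measurable Y)
    (a : Ω → Fin Z → ℝ) (ha : Measurable a) :
    Measurable (fun ω => a ω (Y ω)) := by
  have : (fun ω => a ω (Y ω)) = fun ω => ∑ j, if Y ω = j then a ω j else 0 := by
    funext ω
    rw [Finset.sum_ite_eq (Finset.univ) (Y ω) (a ω)]
    simp
  rw [this]
  refine Finset.measurable_sum _ (fun j _ => ?_)
  exact Measurable.ite (hY (MeasurableSet.singleton j)) ((measurable_pi_apply j).comp ha)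
    measurable_const

lemma eval_integrable {Z : ℕ} {Ω : Type*} [MeasurableSpace Ω]
    (μ : Measure Ω) [IsProbabilityMeasure μ]
    (Y : Ω → Fin Z) (hY : Measurable Y)
    (a : Ω → Fin Z → ℝ) (ha : Measurable a)
    (habd : ∃ M, ∀ ω j, |a ω j| ≤ M) :
    Integrable (fun ω => a ω (Y ω)) μ := by
  obtain ⟨M, hM⟩ := habd
  refine Integrable.mono' (integrable_const M) (eval_measurable Y hY a ha).aestronglyMeasurable ?_
  filter_upwards with ω
  exact hM ω (Y ω)

/-- Any loss whose sum over all `Z` labels is a constant independent of the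
prediction is noise-tolerant to symmetric label noise of rate `η < (Z-1)/Z`:
ordering of clean risks is preserved by the symmetric-noise risks. -/
theorem constant_sum_noise_tolerant {Z : ℕ} (hZ : 2 ≤ Z) (C : ℝ)
    {Ω : Type*} [MeasurableSpace Ω] (μ : Measure Ω) [IsProbabilityMeasure μ]
    (Y : Ω → Fin Z) (hY : Measurable Y)
    {η : ℝ} (hη0 : 0 ≤ η) (hη : η < ((Z : ℝ) - 1) / Z)
    (a b : Ω → Fin Z → ℝ) (ha : Measurable a) (hb : Measurable b)
    (habd : ∃ M, ∀ ω j, |a ω j| ≤ M) (hbbd : ∃ M, ∀ ω j, |b ω j| ≤ M)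
    (hasum : ∀ ω, ∑ j, a ω j = C) (hbsum : ∀ ω, ∑ j, b ω j = C)
    (hclean : (∫ ω, a ω (Y ω) ∂μ) ≤ ∫ ω, b ω (Y ω) ∂μ) :
    (∫ ω, ((1 - η) * a ω (Y ω)
        + η / ((Z : ℝ) - 1) * ∑ j ∈ Finset.univ.filter (· ≠ Y ω), a ω j) ∂μ)
    ≤ ∫ ω, ((1 - η) * b ω (Y ω)
        + η / ((Z : ℝ) - 1) * ∑ j ∈ Finset.univ.filter (· ≠ Y ω), b ω j) ∂μ := by
  have hZ1 : (1 : ℝ) ≤ (Z : ℝ) - 1 := by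
    have : (2 : ℝ) ≤ (Z : ℝ) := by exact_mod_cast hZ
    linarith
  set κ : ℝ := 1 - η - η / ((Z : ℝ) - 1) with hκdef
  have hfilter : ∀ (f : Ω → Fin Z → ℝ), (∀ ω, ∑ j, f ω j = C) →
      ∀ ω, ∑ j ∈ Finset.univ.filter (· ≠ Y ω), f ω j = C - f ω (Y ω) := by
    intro f hf ω
    have := Finset.sum_filter_add_sum_filter_not Finset.univ (· ≠ Y ω) (f ω)
    have h2 : ∑ j ∈ Finset.univ.filter (¬ · ≠ Y ω), f ω j = f ω (Y ω) := by
      have : Finset.univ.filter (¬ · ≠ Y ω) = {Y ω} := by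
        ext j; simp [eq_comm]
      rw [this, Finset.sum_singleton]
    rw [h2, hf ω] at this
    linarith
  have hrw : ∀ (f : Ω → Fin Z → ℝ), (∀ ω, ∑ j, f ω j = C) →
      (fun ω => ((1 - η) * f ω (Y ω)
        + η / ((Z : ℝ) - 1) * ∑ j ∈ Finset.univ.filter (· ≠ Y ω), f ω j))
      = fun ω => κ * f ω (Y ω) + η / ((Z : ℝ) - 1) * C := by
    intro f hf
    funext ω
    rw [hfilter f hf ω]
    ring
  rw [hrw a hasum, hrw b hbsum]
  have hia := eval_integrable μ Y hY a ha habd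
  have hib := eval_integrable μ Y hY b hb hbbd
  rw [integral_add (hia.const_mul κ) (integrable_const _),
      integral_add (hib.const_mul κ) (integrable_const _)]
  simp only [integral_const_mul]
  have hκ : 0 ≤ κ := by
    have hZpos : (0:ℝ) < (Z : ℝ) - 1 := by linarith
    have key : η * (Z:ℝ) < (Z:ℝ) - 1 := (lt_div_iff₀ (by linarith)).mp hη
    have h2 : η / ((Z:ℝ) - 1) ≤ 1 - η := by
      rw [div_le_iff₀ hZpos]; nlinarith
    rw [hκdef]; linarith
  exact add_le_add_left (mul_le_mul_of_nonneg_left hclean hκ) _
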